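/- Let n = 2^{l+1} - 1 and let c be the middle vertex 2^l of the path graph P_n. If x and y are vertices of P_n, then the number of walks of length k from x to y that visit c at least twice is even. -/

import Mathlib

section Aux
open SimpleGraph Walk
variable {V : Type*} [DecidableEq V] {G : SimpleGraph V}

omit [DecidableEq V] in
lemma my_eq_of_support_eq {u v : V} (p : G.Walk u v) :
    ∀ (q : G.Walk u v), p.support = q.support → p = q := by
  induction p with
  | nil =>
    intro q hq
    cases q with
    | nil => rfl
    | cons h' q' => exfalso; simpa using congrArg List.length hq
  | @cons u a v h p ih =>
    intro q hq
    cases q with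
    | nil => exfalso; simpa using congrArg List.length hq
    | @cons _ b _ h' q' =>
      simp only [support_cons, List.cons.injEq, true_and] at hq
      have hab : a = b := by
        have h1 := hq
        rw [support_eq_cons p, support_eq_cons q'] at h1
        exact ((List.cons.injEq _ _ _ _).mp h1).1
      subst hab
      have := ih q' hq
      subst this
      rfl

lemma my_takeUntil_start {c y : V} (b : G.Walk c y) (h : c ∈ b.support) :
    b.takeUntil c h = Walk.nil := by
  cases b <;> simp [takeUntil]

lemma my_dropUntil_start {c y : V} (b : G.Walk c y) (h : c ∈ b.support) :
    b.dropUntil c h = b := by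
  cases b <;> simp [dropUntil]

lemma my_takeUntil_append {x c y : V} (a : G.Walk x c) (b : G.Walk c y)
    (ha : a.support.count c = 1) (h : c ∈ (a.append b).support) :
    (a.append b).takeUntil c h = a ∧ (a.append b).dropUntil c h = b := by
  induction a with
  | nil => exact ⟨my_takeUntil_start b h, my_dropUntil_start b h⟩
  | @cons u v cc r a ih =>
    have hca : cc ∈ a.support := a.end_mem_support
    have h1 : 1 ≤ a.support.count cc := List.one_le_count_iff.mpr hca
    have hu : u ≠ cc := by
      simp only [support_cons, List.count_cons] at ha
      intro hh; subst hh; simp at ha; omega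
    have ha' : a.support.count cc = 1 := by
      simp only [support_cons, List.count_cons] at ha
      simpa [hu] using ha
    have h' : cc ∈ (a.append b).support := by
      rw [mem_support_append_iff]; exact Or.inl hca
    have key := ih b ha' h'
    constructor
    · show Walk.takeUntil (Walk.cons r (a.append b)) cc _ = _
      rw [takeUntil_cons h' hu r, key.1]
    · show Walk.dropUntil (Walk.cons r (a.append b)) cc _ = _
      simp [dropUntil, hu, key.2]

lemma my_count_support_tail {c y : V} (q : G.Walk c y) (a : V) :
    q.support.count a = (if a = c then 1 else 0) + q.support.tail.count a := by
  conv_lhs => rw [support_eq_cons q]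
  rw [List.count_cons]
  by_cases h : a = c
  · simp [h, Nat.add_comm]
  · simp only [h, if_false]
    have h2 : ¬ c = a := fun hh => h hh.symm
    simp [h, h2]

variable (σ : G →g G) (c : V)

/-- Reflect (by `σ`) the part of the walk before the first return to `c`. -/
def reflWalk (hσc : σ c = c) : ∀ {y : V}, G.Walk c y → G.Walk c y
  | _, .nil => .nil
  | _, .cons h q' =>
    if hc' : c ∈ q'.support then
      ((((Walk.cons h (q'.takeUntil c hc')).map σ).copy hσc hσc).append (q'.dropUntil c hc'))
    else .cons h q'

lemma reflWalk_eq (hσc : σ c = c) {d y : V} (h : G.Adj c d) (m : G.Walk d c)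
    (hm : m.support.count c = 1) (r : G.Walk c y) :
    reflWalk σ c hσc ((Walk.cons h m).append r)
      = (((Walk.cons h m).map σ).copy hσc hσc).append r := by
  have hmem : c ∈ (m.append r).support := by
    rw [mem_support_append_iff]; exact Or.inl m.end_mem_support
  show reflWalk σ c hσc (Walk.cons h (m.append r)) = _
  rw [reflWalk, dif_pos hmem, (my_takeUntil_append m r hm hmem).1,
    (my_takeUntil_append m r hm hmem).2]

lemma support_reflWalk_pos (hσc : σ c = c) {d y : V} (h : G.Adj c d) (q' : G.Walk d y)
    (hc' : c ∈ q'.support) :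
    (reflWalk σ c hσc (Walk.cons h q')).support
      = c :: ((q'.takeUntil c hc').support.map σ ++ (q'.dropUntil c hc').support.tail) := by
  rw [reflWalk, dif_pos hc']
  simp [support_append, hσc]

lemma length_reflWalk (hσc : σ c = c) {y : V} (q : G.Walk c y) :
    (reflWalk σ c hσc q).length = q.length := by
  cases q with
  | nil => rfl
  | @cons _ d _ h q' =>
    by_cases hc' : c ∈ q'.support
    · rw [reflWalk, dif_pos hc']
      have hsp : (q'.takeUntil c hc').length + (q'.dropUntil c hc').length = q'.length := by
        conv_rhs => rw [← q'.take_spec hc']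
        rw [length_append]
      simp [length_append]
      omega
    · rw [reflWalk, dif_neg hc']

lemma count_reflWalk (hσc : σ c = c) (hinj : Function.Injective σ) {y : V} (q : G.Walk c y) :
    (reflWalk σ c hσc q).support.count c = q.support.count c := by
  cases q with
  | nil => rfl
  | @cons _ d _ h q' =>
    by_cases hc' : c ∈ q'.support
    · rw [support_reflWalk_pos σ c hσc h q' hc']
      have hmap : ((q'.takeUntil c hc').support.map σ).count c
          = (q'.takeUntil c hc').support.count c := by
        have := List.count_map_of_injective (q'.takeUntil c hc').support σ hinj c
        rwa [hσc] at this
      have hsp : q'.support = (q'.takeUntil c hc').support ++ (q'.dropUntil c hc').support.tail := by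
        conv_lhs => rw [← q'.take_spec hc']
        rw [support_append]
      simp [support_cons, hsp, List.count_append, List.count_cons, hmap]
    · rw [reflWalk, dif_neg hc']

lemma reflWalk_invol (hσc : σ c = c) (hσσ : ∀ v, σ (σ v) = v) {y : V} (q : G.Walk c y) :
    reflWalk σ c hσc (reflWalk σ c hσc q) = q := by
  cases q with
  | nil => rfl
  | @cons _ d _ h q' =>
    by_cases hc' : c ∈ q'.support
    · set m := q'.takeUntil c hc' with hm
      set r := q'.dropUntil c hc' with hr
      have hinj : Function.Injective σ := Function.LeftInverse.injective hσσ
      have step1 : reflWalk σ c hσc (Walk.cons h q')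
          = (((Walk.cons h m).map σ).copy hσc hσc).append r := by
        rw [reflWalk, dif_pos hc']
      rw [step1]
      rw [Walk.map_cons, Walk.copy_cons]
      have hm2 : ((m.map σ).copy rfl hσc).support.count c = 1 := by
        rw [support_copy, Walk.support_map]
        have h0 := List.count_map_of_injective m.support σ hinj c
        rw [hσc] at h0
        rw [h0]
        exact q'.count_support_takeUntil_eq_one hc'
      rw [reflWalk_eq σ c hσc _ _ hm2 r]
      have hsp : q'.support = m.support ++ r.support.tail := by
        conv_lhs => rw [← q'.take_spec hc']
        rw [support_append]
      apply my_eq_of_support_eq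
      rw [support_append, support_copy, Walk.support_map, support_cons, support_copy, Walk.support_map,
        List.map_cons, List.map_map, support_cons, hsp, List.cons_append]
      simp only [hσc, List.cons.injEq, true_and]
      congr 1
      have hcg : ∀ x ∈ m.support, (⇑σ ∘ ⇑σ) x = x := fun x _ => hσσ x
      exact (List.map_congr_left hcg).trans (List.map_id _)
    · rw [reflWalk, dif_neg hc', reflWalk, dif_neg hc']

lemma reflWalk_ne (hσc : σ c = c) (hfix : ∀ d, G.Adj c d → σ d ≠ d) {y : V}
    (q : G.Walk c y) (h2 : 2 ≤ q.support.count c) : reflWalk σ c hσc q ≠ q := by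
  cases q with
  | nil => simp at h2
  | @cons _ d _ h q' =>
    have hc' : c ∈ q'.support := by
      by_contra hcc
      have : q'.support.count c = 0 := List.count_eq_zero.mpr hcc
      simp [List.count_cons, this] at h2
    intro heq
    have hs := congrArg Walk.support heq
    rw [support_reflWalk_pos σ c hσc h q' hc', support_cons] at hs
    have hts := (List.cons.injEq _ _ _ _).mp hs |>.2
    rw [support_eq_cons (q'.takeUntil c hc'), List.map_cons, List.cons_append,
      support_eq_cons q'] at hts
    have : σ d = d := ((List.cons.injEq _ _ _ _).mp hts).1
    exact hfix d h this

/-- Reflect the part of a walk between the first and second visits of `c`. -/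
def reflFull (hσc : σ c = c) {x y : V} (p : G.Walk x y) : G.Walk x y :=
  if h1 : c ∈ p.support then
    (p.takeUntil c h1).append (reflWalk σ c hσc (p.dropUntil c h1))
  else p

lemma length_reflFull (hσc : σ c = c) {x y : V} (p : G.Walk x y) :
    (reflFull σ c hσc p).length = p.length := by
  rw [reflFull]
  split
  · next h1 =>
    rw [length_append, length_reflWalk]
    conv_rhs => rw [← p.take_spec h1]
    rw [length_append]
  · rfl

lemma count_reflFull (hσc : σ c = c) (hinj : Function.Injective σ) {x y : V} (p : G.Walk x y) :
    (reflFull σ c hσc p).support.count c = p.support.count c := by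
  rw [reflFull]
  split
  · next h1 =>
    rw [support_append]
    conv_rhs => rw [← p.take_spec h1]
    rw [support_append, List.count_append, List.count_append]
    congr 1
    have ha := my_count_support_tail (reflWalk σ c hσc (p.dropUntil c h1)) c
    have hb := my_count_support_tail (p.dropUntil c h1) c
    have hcnt := count_reflWalk σ c hσc hinj (p.dropUntil c h1)
    simp only [if_pos rfl] at ha hb
    omega
  · rfl

lemma reflFull_invol (hσc : σ c = c) (hσσ : ∀ v, σ (σ v) = v) {x y : V} (p : G.Walk x y) :
    reflFull σ c hσc (reflFull σ c hσc p) = p := by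
  by_cases h1 : c ∈ p.support
  · have hd1 : reflFull σ c hσc p
        = (p.takeUntil c h1).append (reflWalk σ c hσc (p.dropUntil c h1)) := dif_pos h1
    have htc : (p.takeUntil c h1).support.count c = 1 := p.count_support_takeUntil_eq_one h1
    have h2 : c ∈ (reflFull σ c hσc p).support := by
      rw [hd1, mem_support_append_iff]
      exact Or.inl (p.takeUntil c h1).end_mem_support
    rw [reflFull, dif_pos h2]
    have key : ((reflFull σ c hσc p).takeUntil c h2) = p.takeUntil c h1
        ∧ ((reflFull σ c hσc p).dropUntil c h2) = reflWalk σ c hσc (p.dropUntil c h1) := by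
      have := my_takeUntil_append (p.takeUntil c h1) (reflWalk σ c hσc (p.dropUntil c h1)) htc
        (by rw [← hd1] at *; exact h2)
      constructor
      · rw [← this.1]; congr 1 <;> rw [hd1]
      · rw [← this.2]; congr 1 <;> rw [hd1]
    rw [key.1, key.2, reflWalk_invol σ c hσc hσσ, p.take_spec h1]
  · have hd1 : reflFull σ c hσc p = p := dif_neg h1
    rw [hd1, reflFull, dif_neg h1]

lemma reflFull_ne (hσc : σ c = c) (hfix : ∀ d, G.Adj c d → σ d ≠ d) {x y : V}
    (p : G.Walk x y) (h2 : 2 ≤ p.support.count c) : reflFull σ c hσc p ≠ p := by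
  have h1 : c ∈ p.support := by
    rw [← List.one_le_count_iff]; omega
  have hq2 : 2 ≤ (p.dropUntil c h1).support.count c := by
    have hsp : p.support = (p.takeUntil c h1).support ++ (p.dropUntil c h1).support.tail := by
      conv_lhs => rw [← p.take_spec h1]
      rw [support_append]
    have htc : (p.takeUntil c h1).support.count c = 1 := p.count_support_takeUntil_eq_one h1
    have hb : (p.dropUntil c h1).support.count c
        = 1 + (p.dropUntil c h1).support.tail.count c := by
      simpa using my_count_support_tail (p.dropUntil c h1) c
    rw [hsp, List.count_append, htc] at h2
    omega
  intro heq
  rw [reflFull, dif_pos h1] at heq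
  conv_rhs at heq => rw [← p.take_spec h1]
  have hs := congrArg Walk.support heq
  rw [support_append, support_append] at hs
  have := List.append_cancel_left hs
  have hsupeq : (reflWalk σ c hσc (p.dropUntil c h1)).support = (p.dropUntil c h1).support := by
    rw [support_eq_cons (reflWalk σ c hσc (p.dropUntil c h1)), support_eq_cons (p.dropUntil c h1),
      this]
  exact reflWalk_ne σ c hσc hfix (p.dropUntil c h1) hq2
    (my_eq_of_support_eq _ _ hsupeq)

end Aux

lemma even_card_invol {α : Type*} [DecidableEq α] :
    ∀ (N : ℕ) (s : Finset α) (f : α → α), s.card = N →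
    (∀ a ∈ s, f a ∈ s) → (∀ a ∈ s, f (f a) = a) → (∀ a ∈ s, f a ≠ a) → Even s.card := by
  intro N
  induction N using Nat.strong_induction_on with
  | _ N ih =>
    intro s f hN hmem hinv hne
    rcases s.eq_empty_or_nonempty with rfl | ⟨a, ha⟩
    · simp
    · have hfa : f a ∈ s := hmem a ha
      have hane : f a ≠ a := hne a ha
      have hsub : {a, f a} ⊆ s := by
        intro x hx; simp at hx; rcases hx with rfl | rfl <;> assumption
      have hc2 : ({a, f a} : Finset α).card = 2 := by
        have hna : a ∉ ({f a} : Finset α) := by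
          simp only [Finset.mem_singleton]
          exact fun hh => hane hh.symm
        rw [Finset.card_insert_of_notMem hna, Finset.card_singleton]
      set t := s \ {a, f a} with ht
      have hcard : t.card = s.card - 2 := by rw [Finset.card_sdiff_of_subset hsub, hc2]
      have h2le : 2 ≤ s.card := hc2 ▸ Finset.card_le_card hsub
      have hNpos : 0 < N := by omega
      have htlt : t.card < N := by omega
      have hmemt : ∀ b ∈ t, b ∈ s := fun b hb => (Finset.mem_sdiff.mp hb).1
      have hmem' : ∀ b ∈ t, f b ∈ t := by
        intro b hb
        have hbs := hmemt b hb
        have hb2 := (Finset.mem_sdiff.mp hb).2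
        simp only [Finset.mem_insert, Finset.mem_singleton, not_or] at hb2
        rw [ht, Finset.mem_sdiff]
        refine ⟨hmem b hbs, ?_⟩
        simp only [Finset.mem_insert, Finset.mem_singleton, not_or]
        constructor
        · intro hh
          apply hb2.2
          rw [← hinv b hbs, hh]
        · intro hh
          apply hb2.1
          rw [← hinv b hbs, hh, hinv a ha]
      have hinv' : ∀ b ∈ t, f (f b) = b := fun b hb => hinv b (hmemt b hb)
      have hne' : ∀ b ∈ t, f b ≠ b := fun b hb => hne b (hmemt b hb)
      obtain ⟨m, hm⟩ := ih t.card htlt t f rfl hmem' hinv' hne'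
      exact ⟨m + 1, by omega⟩

/-- The path graph on `n` vertices. -/
def pathGraph (n : ℕ) : SimpleGraph (Fin n) where
  Adj i j := (i : ℕ) + 1 = j ∨ (j : ℕ) + 1 = i
  symm := ⟨fun i j h => h.symm⟩
  loopless := ⟨by intro i h; rcases h with h | h <;> omega⟩

instance (n : ℕ) : DecidableRel (pathGraph n).Adj :=
  fun i j => inferInstanceAs (Decidable (((i : ℕ) + 1 = j) ∨ ((j : ℕ) + 1 = i)))

theorem even_card_walks_visiting_middle_twice (l : ℕ) (n : ℕ) (hn : n = 2 ^ (l + 1) - 1)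
    (c : Fin n) (hc : (c : ℕ) + 1 = 2 ^ l) (k : ℕ) (x y : Fin n) :
    Even (((pathGraph n).finsetWalkLength k x y).filter
      (fun p => 2 ≤ p.support.count c)).card := by
  have hpow : (2:ℕ) ^ (l + 1) = 2 * 2 ^ l := by ring
  have hn2 : n = 2 * (c : ℕ) + 1 := by omega
  have hcn : (c : ℕ) < n := c.isLt
  -- the reflection homomorphism
  have adj_iff : ∀ a b : Fin n, (pathGraph n).Adj a b ↔ ((a:ℕ)+1 = b ∨ (b:ℕ)+1 = a) :=
    fun a b => Iff.rfl
  let σf : Fin n → Fin n := fun v => ⟨n - 1 - v.val, by omega⟩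
  have hσval : ∀ v : Fin n, (σf v : ℕ) = n - 1 - v.val := fun v => rfl
  let σ : pathGraph n →g pathGraph n := by
    refine ⟨σf, ?_⟩
    intro a b hab
    rw [adj_iff] at hab ⊢
    have ha := a.isLt
    have hb := b.isLt
    rw [hσval, hσval]
    omega
  have hσapp : ∀ v : Fin n, (σ v : ℕ) = n - 1 - v.val := fun v => rfl
  have hσc : σ c = c := by
    apply Fin.ext
    rw [hσapp]
    omega
  have hσσ : ∀ v, σ (σ v) = v := by
    intro v
    apply Fin.ext
    rw [hσapp, hσapp]
    have := v.isLt
    omega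
  have hfix : ∀ d, (pathGraph n).Adj c d → σ d ≠ d := by
    intro d hadj heq
    rw [adj_iff] at hadj
    have hd := d.isLt
    have := congrArg Fin.val heq
    rw [hσapp] at this
    omega
  apply even_card_invol _ _ (reflFull σ c hσc) rfl
  · intro p hp
    rw [Finset.mem_filter] at hp ⊢
    rw [SimpleGraph.mem_finsetWalkLength_iff] at hp ⊢
    refine ⟨?_, ?_⟩
    · rw [length_reflFull]; exact hp.1
    · rw [count_reflFull σ c hσc (Function.LeftInverse.injective hσσ)]
      exact hp.2
  · intro p _
    exact reflFull_invol σ c hσc hσσ p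
  · intro p hp
    rw [Finset.mem_filter] at hp
    exact reflFull_ne σ c hσc hfix p hp.2
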